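/- arXiv:1805.04320 — 3 statements merged into one kernel-verified Lean document; each statement's English description precedes it below -/
import Mathlib

section
/- Let v_U ≥ 0, v_Z > 0, c_U > 0, c_Z > 0, ρ ≠ 0 and η > 0, and define the integer sample sizes n_Z := ⌈(1/η²)(ρ² v_Z + √(v_U v_Z ρ² c_U/c_Z))⌉ and n_U := ⌈n_Z √(c_Z v_U/(c_U v_Z ρ²))⌉ (assuming v_U > 0 so the latter is defined). Then the resulting two-sample controlled estimator variance satisfies v_U/n_U + ρ² v_Z/n_Z ≤ η², i.e., the prescribed tolerance η² on the variance is met (and in general the achieved variance is slightly lower, due to the ceiling function). -/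
/-- **Integer sample sizes via ceiling meet the variance tolerance.** With
`n_Z := ⌈(1/η²)(ρ² v_Z + √(v_U v_Z ρ² c_U/c_Z))⌉` and
`n_U := ⌈n_Z √(c_Z v_U/(c_U v_Z ρ²))⌉`, the variance of the two-sample controlled estimator
satisfies `v_U/n_U + ρ² v_Z/n_Z ≤ η²`. -/
theorem ceiling_sample_sizes_meet_tolerance
    (vU vZ cU cZ ρ η : ℝ)
    (hvU : 0 < vU) (hvZ : 0 < vZ) (hcU : 0 < cU) (hcZ : 0 < cZ)
    (hρ : ρ ≠ 0) (hη : 0 < η)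
    (nZ nU : ℕ)
    (hnZ : nZ = ⌈(1 / η ^ 2) * (ρ ^ 2 * vZ + Real.sqrt (vU * vZ * ρ ^ 2 * (cU / cZ)))⌉₊)
    (hnU : nU = ⌈(nZ : ℝ) * Real.sqrt (cZ * vU / (cU * vZ * ρ ^ 2))⌉₊) :
    vU / (nU : ℝ) + ρ ^ 2 * vZ / (nZ : ℝ) ≤ η ^ 2 := by
  have hρ2 : 0 < ρ ^ 2 := by positivity
  set t := Real.sqrt (vU * vZ * ρ ^ 2 * (cU / cZ)) with ht
  set s := Real.sqrt (cZ * vU / (cU * vZ * ρ ^ 2)) with hs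
  have htp : 0 < t := Real.sqrt_pos.2 (by positivity)
  have hsp : 0 < s := Real.sqrt_pos.2 (by positivity)
  have hst : s * t = vU := by
    rw [hs, ht, ← Real.sqrt_mul (by positivity)]
    rw [show cZ * vU / (cU * vZ * ρ ^ 2) * (vU * vZ * ρ ^ 2 * (cU / cZ)) = vU ^ 2 by
      field_simp]
    exact Real.sqrt_sq hvU.le
  set a := (1 / η ^ 2) * (ρ ^ 2 * vZ + t) with ha
  have haPos : 0 < a := by positivity
  have hZge : a ≤ (nZ : ℝ) := by rw [hnZ]; exact Nat.le_ceil a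
  have hZpos : 0 < (nZ : ℝ) := lt_of_lt_of_le haPos hZge
  have hUge : (nZ : ℝ) * s ≤ (nU : ℝ) := by rw [hnU]; exact Nat.le_ceil _
  have hUpos : 0 < (nU : ℝ) := lt_of_lt_of_le (by positivity) hUge
  have h1 : vU / (nU : ℝ) ≤ t / (nZ : ℝ) := by
    rw [div_le_div_iff₀ hUpos hZpos]
    calc vU * nZ = t * ((nZ : ℝ) * s) := by rw [← hst]; ring
      _ ≤ t * nU := by nlinarith
  have h2 : (t + ρ ^ 2 * vZ) / (nZ : ℝ) ≤ η ^ 2 := by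
    rw [div_le_iff₀ hZpos]
    have hae : t + ρ ^ 2 * vZ = a * η ^ 2 := by rw [ha]; field_simp; ring
    nlinarith
  calc vU / (nU : ℝ) + ρ ^ 2 * vZ / (nZ : ℝ)
      ≤ t / (nZ : ℝ) + ρ ^ 2 * vZ / (nZ : ℝ) := by linarith
    _ = (t + ρ ^ 2 * vZ) / (nZ : ℝ) := by ring
    _ ≤ η ^ 2 := h2
end

section
/- Let (Ω, 𝓕, ℙ) be a probability space, ζ_0, …, ζ_n square-integrable real random variables, ρ ∈ ℝ^n, integers 1 ≤ m_0 ≤ m_1 ≤ … ≤ m_n, and (ω_k)_{k=1}^{m_n} an i.i.d. sample with common law ℙ. Then the variance of the multi-fidelity Monte Carlo estimator ϑ_m(X) := (1/m_0) ∑_{k=1}^{m_0} ζ_0(ω_k) + ∑_{j=1}^n ρ_j ( (1/m_j) ∑_{k=1}^{m_j} ζ_j(ω_k) − (1/m_{j−1}) ∑_{k=1}^{m_{j−1}} ζ_j(ω_k) ) equals E(m, ρ) := Var(ζ_0)/m_0 + ∑_{j=1}^n (1/m_{j−1} − 1/m_j) ( ρ_j² Var(ζ_j) − 2 ρ_j Cov(ζ_0,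 ζ_j) ). -/
open MeasureTheory ProbabilityTheory

/-- Covariance of two real random variables: `Cov(A,B) := E[(A − E[A])(B − E[B])]`. -/
noncomputable def cov {Ω : Type*} [MeasurableSpace Ω] (P : Measure Ω) (A B : Ω → ℝ) : ℝ :=
  ∫ ω, (A ω - ∫ ω', A ω' ∂P) * (B ω - ∫ ω', B ω' ∂P) ∂P


section Helpers

variable {Ω : Type*} [MeasurableSpace Ω] {P : Measure Ω} [IsProbabilityMeasure P]

lemma mf_integrable_mul {A B : Ω → ℝ} (hA : MemLp A 2 P) (hB : MemLp B 2 P) :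
    Integrable (fun ω => A ω * B ω) P := by
  refine ((hA.integrable_sq.add hB.integrable_sq).const_mul (1/2)).mono'
    (hA.aestronglyMeasurable.mul hB.aestronglyMeasurable) ?_
  filter_upwards with ω
  simp only [norm_mul, Real.norm_eq_abs, Pi.add_apply]
  nlinarith [sq_nonneg (|A ω| - |B ω|), abs_nonneg (A ω), abs_nonneg (B ω),
    sq_abs (A ω), sq_abs (B ω)]

lemma mf_cov_eq {A B : Ω → ℝ} (hA : MemLp A 2 P) (hB : MemLp B 2 P) :
    cov P A B = (∫ ω, A ω * B ω ∂P) - (∫ ω, A ω ∂P) * (∫ ω, B ω ∂P) := by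
  have iA := hA.integrable one_le_two
  have iB := hB.integrable one_le_two
  have iAB := mf_integrable_mul hA hB
  set a := ∫ ω, A ω ∂P with ha
  set b := ∫ ω, B ω ∂P with hb
  have key : ∀ ω, (A ω - a) * (B ω - b) = (A ω * B ω - a * B ω) - (b * A ω - a * b) := by
    intro ω; ring
  rw [cov]
  simp_rw [← ha, ← hb, key]
  have i1 : Integrable (fun ω => A ω * B ω - a * B ω) P := iAB.sub (iB.const_mul a)
  have i2 : Integrable (fun ω => b * A ω - a * b) P := (iA.const_mul b).sub (integrable_const (a * b))
  rw [integral_sub i1 i2,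
    integral_sub iAB (iB.const_mul a), integral_sub (iA.const_mul b) (integrable_const (a * b)),
    integral_const_mul, integral_const_mul, integral_const, probReal_univ]
  simp only [← ha, ← hb, ENNReal.toReal_one, smul_eq_mul, one_mul]
  ring

lemma mf_cov_comm (A B : Ω → ℝ) : cov P A B = cov P B A := by
  rw [cov, cov]
  congr 1; funext ω; ring

lemma mf_variance_eq_cov {A : Ω → ℝ} (hA : MemLp A 2 P) : variance A P = cov P A A := by
  rw [variance_eq_sub hA, mf_cov_eq hA hA, ← sq]
  congr 1
  · apply integral_congr_ae; filter_upwards with ω; simp [sq]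

lemma mf_variance_sum_mul {ι : Type*} (s : Finset ι) (a : ι → ℝ) (Z : ι → Ω → ℝ)
    (hZ : ∀ j ∈ s, MemLp (Z j) 2 P) :
    variance (fun ω => ∑ j ∈ s, a j * Z j ω) P
      = ∑ j ∈ s, ∑ j' ∈ s, (a j * a j') * cov P (Z j) (Z j') := by
  have hmem : MemLp (fun ω => ∑ j ∈ s, a j * Z j ω) 2 P :=
    memLp_finset_sum s (fun j hj => (hZ j hj).const_mul (a j))
  rw [variance_eq_sub hmem]
  have h1 : (∫ ω, ((fun ω => ∑ j ∈ s, a j * Z j ω) ^ 2) ω ∂P)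
      = ∑ j ∈ s, ∑ j' ∈ s, (a j * a j') * ∫ ω, Z j ω * Z j' ω ∂P := by
    have key : ∀ ω, ((fun ω => ∑ j ∈ s, a j * Z j ω) ^ 2) ω
        = ∑ j ∈ s, ∑ j' ∈ s, (a j * a j') * (Z j ω * Z j' ω) := by
      intro ω
      simp only [Pi.pow_apply, sq, Finset.sum_mul_sum]
      exact Finset.sum_congr rfl fun j _ => Finset.sum_congr rfl fun j' _ => by ring
    simp_rw [key]
    rw [integral_finset_sum _ (fun j hj => integrable_finset_sum _ (fun j' hj' =>
      ((mf_integrable_mul (hZ j hj) (hZ j' hj')).const_mul _)))]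
    refine Finset.sum_congr rfl fun j hj => ?_
    rw [integral_finset_sum _ (fun j' hj' => (mf_integrable_mul (hZ j hj) (hZ j' hj')).const_mul _)]
    exact Finset.sum_congr rfl fun j' hj' => integral_const_mul _ _
  have h2 : (∫ ω, ∑ j ∈ s, a j * Z j ω ∂P) = ∑ j ∈ s, a j * ∫ ω, Z j ω ∂P := by
    rw [integral_finset_sum _ (fun j hj => ((hZ j hj).integrable one_le_two).const_mul _)]
    exact Finset.sum_congr rfl fun j hj => integral_const_mul _ _
  calc (∫ ω, ((fun ω => ∑ j ∈ s, a j * Z j ω) ^ 2) ω ∂P)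
        - (∫ ω, ∑ j ∈ s, a j * Z j ω ∂P) ^ 2
      = (∑ j ∈ s, ∑ j' ∈ s, (a j * a j') * ∫ ω, Z j ω * Z j' ω ∂P)
        - ∑ j ∈ s, ∑ j' ∈ s, (a j * a j') * ((∫ ω, Z j ω ∂P) * ∫ ω, Z j' ω ∂P) := by
        rw [h1, h2, sq, Finset.sum_mul_sum]
        congr 1
        exact Finset.sum_congr rfl fun j _ => Finset.sum_congr rfl fun j' _ => by ring
    _ = ∑ j ∈ s, ∑ j' ∈ s, (a j * a j') * cov P (Z j) (Z j') := by
        rw [← Finset.sum_sub_distrib]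
        refine Finset.sum_congr rfl fun j hj => ?_
        rw [← Finset.sum_sub_distrib]
        refine Finset.sum_congr rfl fun j' hj' => ?_
        rw [mf_cov_eq (hZ j hj) (hZ j' hj')]
        ring

lemma mf_variance_comp {Ω' : Type*} [MeasurableSpace Ω'] {P' : Measure Ω'}
    [IsProbabilityMeasure P'] {f : Ω' → Ω} (hf : Measurable f)
    (hmap : Measure.map f P' = P) {g : Ω → ℝ} (hg : Measurable g) (hg2 : MemLp g 2 P) :
    variance (fun ω' => g (f ω')) P' = variance g P := by
  have hg2m : MemLp g 2 (Measure.map f P') := by rw [hmap]; exact hg2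
  have hg2' : MemLp (fun ω' => g (f ω')) 2 P' :=
    hg2m.comp_of_map hf.aemeasurable
  rw [variance_eq_sub hg2', variance_eq_sub hg2]
  simp only [Pi.pow_apply]
  rw [← hmap, integral_map hf.aemeasurable hg.aestronglyMeasurable,
    integral_map hf.aemeasurable ((hg.pow_const 2).aestronglyMeasurable)]

end Helpers

section Sums

lemma mf_sum_if_mul_fun (p N : ℕ) (hpN : p ≤ N) (c : ℝ) (g : ℕ → ℝ) :
    ∑ k ∈ Finset.range N, (if k < p then c else 0) * g k = c * ∑ k ∈ Finset.range p, g k := by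
  rw [Finset.mul_sum, ← Finset.sum_subset (Finset.range_subset_range.2 hpN)
    (fun k _ hk => by rw [if_neg (fun h => hk (Finset.mem_range.2 h)), zero_mul])]
  exact Finset.sum_congr rfl (fun k hk => by rw [if_pos (Finset.mem_range.1 hk)])

lemma mf_sum_ind_mul (N p q : ℕ) (hpq : p ≤ q) (hqN : q ≤ N) (x y : ℝ) :
    ∑ k ∈ Finset.range N, (if k < p then x else 0) * (if k < q then y else 0)
      = p * (x * y) := by
  have : ∀ k, (if k < p then x else 0) * (if k < q then y else 0)
      = if k < p then x * y else 0 := by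
    intro k
    split_ifs with h1 h2
    · rfl
    · omega
    · simp
    · simp
  simp_rw [this]
  rw [← Finset.sum_subset (Finset.range_subset_range.2 (hpq.trans hqN))
    (fun k _ hk => by rw [if_neg (fun h => hk (Finset.mem_range.2 h))]),
    Finset.sum_congr rfl (fun k hk => if_pos (Finset.mem_range.1 hk)),
    Finset.sum_const, Finset.card_range, nsmul_eq_mul]

end Sums

noncomputable def mfc (ρ : ℕ → ℝ) (m : ℕ → ℕ) (j k : ℕ) : ℝ :=
  if j = 0 then (if k < m 0 then ((m 0 : ℝ))⁻¹ else 0)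
  else ρ j * ((if k < m j then ((m j : ℝ))⁻¹ else 0)
    - (if k < m (j - 1) then ((m (j - 1) : ℝ))⁻¹ else 0))

lemma mfc_S00 (ρ : ℕ → ℝ) (m : ℕ → ℕ) (N : ℕ) (h1 : 1 ≤ m 0) (h2 : m 0 ≤ N) :
    ∑ k ∈ Finset.range N, mfc ρ m 0 k * mfc ρ m 0 k = ((m 0 : ℝ))⁻¹ := by
  simp only [mfc, if_pos rfl, if_true, eq_self_iff_true]
  rw [mf_sum_ind_mul N (m 0) (m 0) le_rfl h2]
  have h0 : ((m 0 : ℕ) : ℝ) ≠ 0 := Nat.cast_ne_zero.2 (by omega)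
  field_simp

lemma mfc_S0j (ρ : ℕ → ℝ) (m : ℕ → ℕ) (N j : ℕ) (hj : j ≠ 0) (h0 : 1 ≤ m 0)
    (h01 : m 0 ≤ m (j - 1)) (h12 : m (j - 1) ≤ m j) (h2 : m j ≤ N) :
    ∑ k ∈ Finset.range N, mfc ρ m 0 k * mfc ρ m j k
      = ρ j * (((m j : ℝ))⁻¹ - ((m (j - 1) : ℝ))⁻¹) := by
  simp only [mfc, if_pos rfl, if_true, eq_self_iff_true, if_neg hj]
  have key : ∀ k : ℕ, (if k < m 0 then ((m 0 : ℝ))⁻¹ else 0)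
      * (ρ j * ((if k < m j then ((m j : ℝ))⁻¹ else 0)
        - (if k < m (j - 1) then ((m (j - 1) : ℝ))⁻¹ else 0)))
      = ρ j * ((if k < m 0 then ((m 0 : ℝ))⁻¹ else 0) * (if k < m j then ((m j : ℝ))⁻¹ else 0))
        - ρ j * ((if k < m 0 then ((m 0 : ℝ))⁻¹ else 0)
          * (if k < m (j - 1) then ((m (j - 1) : ℝ))⁻¹ else 0)) := fun k => by ring
  simp_rw [key]
  rw [Finset.sum_sub_distrib, ← Finset.mul_sum, ← Finset.mul_sum,
    mf_sum_ind_mul N (m 0) (m j) (h01.trans h12) h2,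
    mf_sum_ind_mul N (m 0) (m (j - 1)) h01 (h12.trans h2)]
  have h0' : ((m 0 : ℕ) : ℝ) ≠ 0 := Nat.cast_ne_zero.2 (by omega)
  have ha : ((m (j - 1) : ℕ) : ℝ) ≠ 0 := Nat.cast_ne_zero.2 (by omega)
  have hb : ((m j : ℕ) : ℝ) ≠ 0 := Nat.cast_ne_zero.2 (by omega)
  field_simp

lemma mfc_Sjj (ρ : ℕ → ℝ) (m : ℕ → ℕ) (N j : ℕ) (hj : j ≠ 0) (h1 : 1 ≤ m (j - 1))
    (h12 : m (j - 1) ≤ m j) (h2 : m j ≤ N) :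
    ∑ k ∈ Finset.range N, mfc ρ m j k * mfc ρ m j k
      = ρ j ^ 2 * (((m (j - 1) : ℝ))⁻¹ - ((m j : ℝ))⁻¹) := by
  simp only [mfc, if_neg hj]
  have key : ∀ k : ℕ, (ρ j * ((if k < m j then ((m j : ℝ))⁻¹ else 0)
        - (if k < m (j - 1) then ((m (j - 1) : ℝ))⁻¹ else 0)))
      * (ρ j * ((if k < m j then ((m j : ℝ))⁻¹ else 0)
        - (if k < m (j - 1) then ((m (j - 1) : ℝ))⁻¹ else 0)))
      = ρ j ^ 2 * ((if k < m j then ((m j : ℝ))⁻¹ else 0) * (if k < m j then ((m j : ℝ))⁻¹ else 0))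
        - 2 * ρ j ^ 2 * ((if k < m (j - 1) then ((m (j - 1) : ℝ))⁻¹ else 0)
            * (if k < m j then ((m j : ℝ))⁻¹ else 0))
        + ρ j ^ 2 * ((if k < m (j - 1) then ((m (j - 1) : ℝ))⁻¹ else 0)
            * (if k < m (j - 1) then ((m (j - 1) : ℝ))⁻¹ else 0)) := fun k => by ring
  simp_rw [key]
  rw [Finset.sum_add_distrib, Finset.sum_sub_distrib, ← Finset.mul_sum, ← Finset.mul_sum,
    ← Finset.mul_sum,
    mf_sum_ind_mul N (m j) (m j) le_rfl h2,
    mf_sum_ind_mul N (m (j - 1)) (m j) h12 h2,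
    mf_sum_ind_mul N (m (j - 1)) (m (j - 1)) le_rfl (h12.trans h2)]
  have ha : ((m (j - 1) : ℕ) : ℝ) ≠ 0 := Nat.cast_ne_zero.2 (by omega)
  have hb : ((m j : ℕ) : ℝ) ≠ 0 := Nat.cast_ne_zero.2 (by omega)
  field_simp
  ring

lemma mfc_Soff (ρ : ℕ → ℝ) (m : ℕ → ℕ) (N j j' : ℕ) (hj : j ≠ 0) (hlt : j < j')
    (h1 : 1 ≤ m (j - 1)) (h12 : m (j - 1) ≤ m j) (hjq : m j ≤ m (j' - 1))
    (hq : m (j' - 1) ≤ m j') (h2 : m j' ≤ N) :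
    ∑ k ∈ Finset.range N, mfc ρ m j k * mfc ρ m j' k = 0 := by
  have hj' : j' ≠ 0 := by omega
  simp only [mfc, if_neg hj, if_neg hj']
  have key : ∀ k : ℕ, (ρ j * ((if k < m j then ((m j : ℝ))⁻¹ else 0)
        - (if k < m (j - 1) then ((m (j - 1) : ℝ))⁻¹ else 0)))
      * (ρ j' * ((if k < m j' then ((m j' : ℝ))⁻¹ else 0)
        - (if k < m (j' - 1) then ((m (j' - 1) : ℝ))⁻¹ else 0)))
      = (ρ j * ρ j') * ((if k < m j then ((m j : ℝ))⁻¹ else 0)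
            * (if k < m j' then ((m j' : ℝ))⁻¹ else 0))
        - (ρ j * ρ j') * ((if k < m j then ((m j : ℝ))⁻¹ else 0)
            * (if k < m (j' - 1) then ((m (j' - 1) : ℝ))⁻¹ else 0))
        - ((ρ j * ρ j') * ((if k < m (j - 1) then ((m (j - 1) : ℝ))⁻¹ else 0)
            * (if k < m j' then ((m j' : ℝ))⁻¹ else 0))
          - (ρ j * ρ j') * ((if k < m (j - 1) then ((m (j - 1) : ℝ))⁻¹ else 0)
            * (if k < m (j' - 1) then ((m (j' - 1) : ℝ))⁻¹ else 0))) := fun k => by ring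
  simp_rw [key]
  rw [Finset.sum_sub_distrib, Finset.sum_sub_distrib, Finset.sum_sub_distrib,
    ← Finset.mul_sum, ← Finset.mul_sum, ← Finset.mul_sum, ← Finset.mul_sum,
    mf_sum_ind_mul N (m j) (m j') (hjq.trans hq) h2,
    mf_sum_ind_mul N (m j) (m (j' - 1)) hjq (hq.trans h2),
    mf_sum_ind_mul N (m (j - 1)) (m j') (h12.trans (hjq.trans hq)) h2,
    mf_sum_ind_mul N (m (j - 1)) (m (j' - 1)) (h12.trans hjq) (hq.trans h2)]
  have ha : ((m (j - 1) : ℕ) : ℝ) ≠ 0 := Nat.cast_ne_zero.2 (by omega)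
  have hb : ((m j : ℕ) : ℝ) ≠ 0 := Nat.cast_ne_zero.2 (by omega)
  have hc : ((m (j' - 1) : ℕ) : ℝ) ≠ 0 := Nat.cast_ne_zero.2 (by omega)
  have hd : ((m j' : ℕ) : ℝ) ≠ 0 := Nat.cast_ne_zero.2 (by omega)
  field_simp
  ring


/-- **Variance of the multi-fidelity Monte Carlo estimator.** In the setting of nested
subsamples of a common i.i.d. sample `ωs` with law `P`, the estimator
`ϑ := (1/m 0) ∑_{k<m 0} ζ 0 (ωs k ·) + ∑_{j=1}^n ρ j ((1/m j) ∑_{k<m j} ζ j (ωs k ·)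
  − (1/m (j−1)) ∑_{k<m (j−1)} ζ j (ωs k ·))` has variance
`Var(ζ 0)/m 0 + ∑_{j=1}^n (1/m (j−1) − 1/m j)(ρ j² Var(ζ j) − 2 ρ j Cov(ζ 0, ζ j))`. -/
theorem multifidelity_estimator_variance
    {Ω : Type*} [MeasurableSpace Ω] (P : Measure Ω) [IsProbabilityMeasure P]
    {Ω' : Type*} [MeasurableSpace Ω'] (P' : Measure Ω') [IsProbabilityMeasure P']
    (n : ℕ) (ζ : ℕ → Ω → ℝ)
    (hζmeas : ∀ j, j ≤ n → Measurable (ζ j))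
    (hζ : ∀ j, j ≤ n → MemLp (ζ j) 2 P)
    (ρ : ℕ → ℝ) (m : ℕ → ℕ)
    (hm0 : 1 ≤ m 0) (hmono : ∀ j, j < n → m j ≤ m (j + 1))
    (ωs : ℕ → Ω' → Ω)
    (hωmeas : ∀ k, Measurable (ωs k))
    (hindep : iIndepFun ωs P')
    (hlaw : ∀ k, Measure.map (ωs k) P' = P)
    (ϑ : Ω' → ℝ)
    (hϑ : ϑ = fun ω' =>
      (1 / (m 0 : ℝ)) * ∑ k ∈ Finset.range (m 0), ζ 0 (ωs k ω')
      + ∑ j ∈ Finset.Icc 1 n, ρ j *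
          ((1 / (m j : ℝ)) * ∑ k ∈ Finset.range (m j), ζ j (ωs k ω')
            - (1 / (m (j - 1) : ℝ)) * ∑ k ∈ Finset.range (m (j - 1)), ζ j (ωs k ω'))) :
    variance ϑ P' = variance (ζ 0) P / (m 0 : ℝ)
      + ∑ j ∈ Finset.Icc 1 n, (1 / (m (j - 1) : ℝ) - 1 / (m j : ℝ)) *
          (ρ j ^ 2 * variance (ζ j) P - 2 * ρ j * cov P (ζ 0) (ζ j)) := by
  classical
  subst hϑ
  -- monotonicity facts
  have hmle : ∀ i j : ℕ, i ≤ j → j ≤ n → m i ≤ m j := by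
    intro i j
    induction j with
    | zero => intro hij _; obtain rfl : i = 0 := Nat.le_zero.1 hij; exact le_rfl
    | succ j ih =>
      intro hij hjn
      by_cases h : i = j + 1
      · subst h; exact le_rfl
      · exact (ih (by omega) (by omega)).trans (hmono j (by omega))
  have hm1 : ∀ j, j ≤ n → 1 ≤ m j := fun j hj => hm0.trans (hmle 0 j (Nat.zero_le _) hj)
  set N := m n with hN
  have hset : Finset.range (n + 1) = insert 0 (Finset.Icc 1 n) := by
    ext k; simp only [Finset.mem_range, Finset.mem_insert, Finset.mem_Icc]; omega
  have h0notin : (0 : ℕ) ∉ Finset.Icc 1 n := by simp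
  -- the per-sample contribution
  set F : ℕ → Ω → ℝ := fun k ω => ∑ j ∈ Finset.range (n + 1), mfc ρ m j k * ζ j ω with hF
  have hjmem : ∀ j ∈ Finset.range (n + 1), j ≤ n :=
    fun j hj => Nat.lt_succ_iff.1 (Finset.mem_range.1 hj)
  have hFmeas : ∀ k, Measurable (F k) := fun k =>
    Finset.measurable_sum _ (fun j hj => ((hζmeas j (hjmem j hj)).const_mul _))
  have hF2 : ∀ k, MemLp (F k) 2 P := fun k =>
    memLp_finset_sum _ (fun j hj => (hζ j (hjmem j hj)).const_mul _)
  -- Step A : rewrite the estimator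
  have hϑ' : (fun ω' =>
      (1 / (m 0 : ℝ)) * ∑ k ∈ Finset.range (m 0), ζ 0 (ωs k ω')
      + ∑ j ∈ Finset.Icc 1 n, ρ j *
          ((1 / (m j : ℝ)) * ∑ k ∈ Finset.range (m j), ζ j (ωs k ω')
            - (1 / (m (j - 1) : ℝ)) * ∑ k ∈ Finset.range (m (j - 1)), ζ j (ωs k ω')))
      = ∑ k ∈ Finset.range N, F k ∘ ωs k := by
    funext ω'
    simp only [Finset.sum_apply, Function.comp_apply, hF]
    rw [Finset.sum_comm, hset, Finset.sum_insert h0notin]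
    congr 1
    · simp only [mfc, if_pos rfl, if_true, eq_self_iff_true]
      rw [mf_sum_if_mul_fun (m 0) N (hmle 0 n (Nat.zero_le _) le_rfl) _ _, one_div]
    · refine Finset.sum_congr rfl fun j hj => ?_
      obtain ⟨hj1, hjn⟩ := Finset.mem_Icc.1 hj
      have hjne : j ≠ 0 := by omega
      simp only [mfc, if_neg hjne]
      have key : ∀ k : ℕ, (ρ j * ((if k < m j then ((m j : ℝ))⁻¹ else 0)
            - (if k < m (j - 1) then ((m (j - 1) : ℝ))⁻¹ else 0))) * ζ j (ωs k ω')
          = ρ j * ((if k < m j then ((m j : ℝ))⁻¹ else 0) * ζ j (ωs k ω')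
            - (if k < m (j - 1) then ((m (j - 1) : ℝ))⁻¹ else 0) * ζ j (ωs k ω')) :=
        fun k => by ring
      simp_rw [key]
      rw [← Finset.mul_sum, Finset.sum_sub_distrib,
        mf_sum_if_mul_fun (m j) N (hmle j n hjn le_rfl) _ _,
        mf_sum_if_mul_fun (m (j - 1)) N
          ((hmle (j - 1) j (by omega) hjn).trans (hmle j n hjn le_rfl)) _ _,
        one_div, one_div]
  rw [hϑ']
  -- Step B : independence, variance of the sum
  have hXind : iIndepFun (fun k => F k ∘ ωs k) P' :=
    hindep.comp F hFmeas
  have hX2 : ∀ k ∈ Finset.range N, MemLp (F k ∘ ωs k) 2 P' := by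
    intro k _
    have h := hF2 k
    rw [← hlaw k] at h
    exact h.comp_of_map (hωmeas k).aemeasurable
  rw [IndepFun.variance_sum hX2 (fun i _ j _ hij => hXind.indepFun hij)]
  -- Step C : push forward and expand each variance
  have hstep : ∀ k, variance (F k ∘ ωs k) P'
      = ∑ j ∈ Finset.range (n + 1), ∑ j' ∈ Finset.range (n + 1),
          (mfc ρ m j k * mfc ρ m j' k) * cov P (ζ j) (ζ j') := by
    intro k
    have h1 : variance (F k ∘ ωs k) P' = variance (F k) P :=
      mf_variance_comp (hωmeas k) (hlaw k) (hFmeas k) (hF2 k)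
    rw [h1, hF]
    exact mf_variance_sum_mul _ _ _ (fun j hj => hζ j (hjmem j hj))
  simp_rw [hstep]
  -- Step D : swap the sums
  rw [Finset.sum_comm]
  have hswap : ∀ j ∈ Finset.range (n + 1),
      ∑ k ∈ Finset.range N, ∑ j' ∈ Finset.range (n + 1),
          (mfc ρ m j k * mfc ρ m j' k) * cov P (ζ j) (ζ j')
      = ∑ j' ∈ Finset.range (n + 1),
          (∑ k ∈ Finset.range N, mfc ρ m j k * mfc ρ m j' k) * cov P (ζ j) (ζ j') := by
    intro j _
    rw [Finset.sum_comm]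
    exact Finset.sum_congr rfl fun j' _ => by rw [Finset.sum_mul]
  rw [Finset.sum_congr rfl hswap]
  -- Step E : compute the coefficient sums
  have hNle : ∀ j, j ≤ n → m j ≤ N := fun j hj => hmle j n hj le_rfl
  have hScomm : ∀ j j' : ℕ, ∑ k ∈ Finset.range N, mfc ρ m j k * mfc ρ m j' k
      = ∑ k ∈ Finset.range N, mfc ρ m j' k * mfc ρ m j k :=
    fun j j' => Finset.sum_congr rfl fun k _ => mul_comm _ _
  rw [hset, Finset.sum_insert h0notin, Finset.sum_insert h0notin]
  rw [Finset.sum_congr rfl (fun j (hj : j ∈ Finset.Icc 1 n) => Finset.sum_insert h0notin)]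
  -- the three diagonal/off-diagonal computations
  have hS00 : ∑ k ∈ Finset.range N, mfc ρ m 0 k * mfc ρ m 0 k = ((m 0 : ℝ))⁻¹ :=
    mfc_S00 ρ m N hm0 (hNle 0 (Nat.zero_le _))
  have hS0j : ∀ j ∈ Finset.Icc 1 n, ∑ k ∈ Finset.range N, mfc ρ m 0 k * mfc ρ m j k
      = ρ j * (((m j : ℝ))⁻¹ - ((m (j - 1) : ℝ))⁻¹) := by
    intro j hj
    obtain ⟨hj1, hjn⟩ := Finset.mem_Icc.1 hj
    exact mfc_S0j ρ m N j (by omega) hm0 (hmle 0 (j - 1) (Nat.zero_le _) (by omega))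
      (hmle (j - 1) j (by omega) hjn) (hNle j hjn)
  have hSjj : ∀ j ∈ Finset.Icc 1 n, ∑ k ∈ Finset.range N, mfc ρ m j k * mfc ρ m j k
      = ρ j ^ 2 * (((m (j - 1) : ℝ))⁻¹ - ((m j : ℝ))⁻¹) := by
    intro j hj
    obtain ⟨hj1, hjn⟩ := Finset.mem_Icc.1 hj
    exact mfc_Sjj ρ m N j (by omega) (hm1 (j - 1) (by omega))
      (hmle (j - 1) j (by omega) hjn) (hNle j hjn)
  have hSoff : ∀ j ∈ Finset.Icc 1 n, ∀ j' ∈ Finset.Icc 1 n, j ≠ j' →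
      ∑ k ∈ Finset.range N, mfc ρ m j k * mfc ρ m j' k = 0 := by
    intro j hj j' hj' hne
    obtain ⟨hj1, hjn⟩ := Finset.mem_Icc.1 hj
    obtain ⟨hj'1, hj'n⟩ := Finset.mem_Icc.1 hj'
    rcases lt_or_gt_of_ne hne with h | h
    · exact mfc_Soff ρ m N j j' (by omega) h (hm1 (j - 1) (by omega))
        (hmle (j - 1) j (by omega) hjn) (hmle j (j' - 1) (by omega) (by omega))
        (hmle (j' - 1) j' (by omega) hj'n) (hNle j' hj'n)
    · rw [hScomm]
      exact mfc_Soff ρ m N j' j (by omega) h (hm1 (j' - 1) (by omega))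
        (hmle (j' - 1) j' (by omega) hj'n) (hmle j' (j - 1) (by omega) (by omega))
        (hmle (j - 1) j (by omega) hjn) (hNle j hjn)
  have hdiag : ∀ j ∈ Finset.Icc 1 n,
      ∑ j' ∈ Finset.Icc 1 n,
          (∑ k ∈ Finset.range N, mfc ρ m j k * mfc ρ m j' k) * cov P (ζ j) (ζ j')
      = ρ j ^ 2 * (((m (j - 1) : ℝ))⁻¹ - ((m j : ℝ))⁻¹) * cov P (ζ j) (ζ j) := by
    intro j hj
    rw [Finset.sum_eq_single_of_mem j hj
      (fun j' hj' hne => by rw [hSoff j hj j' hj' (Ne.symm hne), zero_mul]), hSjj j hj]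
  rw [hS00]
  have e1 : ∑ j' ∈ Finset.Icc 1 n, (∑ k ∈ Finset.range N, mfc ρ m 0 k * mfc ρ m j' k)
        * cov P (ζ 0) (ζ j')
      = ∑ j' ∈ Finset.Icc 1 n, (ρ j' * (((m j' : ℝ))⁻¹ - ((m (j' - 1) : ℝ))⁻¹))
        * cov P (ζ 0) (ζ j') :=
    Finset.sum_congr rfl (fun j hj => by rw [hS0j j hj])
  have e2 : ∑ j ∈ Finset.Icc 1 n,
        ((∑ k ∈ Finset.range N, mfc ρ m j k * mfc ρ m 0 k) * cov P (ζ j) (ζ 0)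
          + ∑ j' ∈ Finset.Icc 1 n,
              (∑ k ∈ Finset.range N, mfc ρ m j k * mfc ρ m j' k) * cov P (ζ j) (ζ j'))
      = ∑ j ∈ Finset.Icc 1 n,
          ((ρ j * (((m j : ℝ))⁻¹ - ((m (j - 1) : ℝ))⁻¹)) * cov P (ζ j) (ζ 0)
            + ρ j ^ 2 * (((m (j - 1) : ℝ))⁻¹ - ((m j : ℝ))⁻¹) * cov P (ζ j) (ζ j)) :=
    Finset.sum_congr rfl (fun j hj => by rw [hScomm j 0, hS0j j hj, hdiag j hj])
  rw [e1, e2]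
  rw [mf_variance_eq_cov (hζ 0 (Nat.zero_le n)), add_assoc, ← Finset.sum_add_distrib]
  congr 1
  · ring
  · refine Finset.sum_congr rfl fun j hj => ?_
    obtain ⟨hj1, hjn⟩ := Finset.mem_Icc.1 hj
    rw [mf_variance_eq_cov (hζ j hjn), mf_cov_comm (ζ j) (ζ 0)]
    ring
end

section
/- Under the hypotheses of the multi-fidelity optimal-allocation theorem (σ_j > 0, γ_j > 0, correlations r_j := Cov(ζ_0, ζ_j)/(σ_0 σ_j) with r_0 = 1, r_{n+1} := 0, |r_j| > |r_{j+1}|, r_1² < 1, and γ_i/γ_{i+1} > (r_i² − r_{i+1}²)/(r_{i+1}² − r_{i+2}²)), the optimal solution (m̆, ρ̆) with m̆_0 = B(∑_{j=0}^n √(γ_j γ_0 (r_j² − r_{j+1}²)/(1 − r_1²)))^{−1}, m̆_j = m̆_0 √((γ_0/γ_j)(r_j² − r_{j+1}²)/(1 − r_1²)) and ρ̆_j = Cov(ζ_0, ζ_j)/Var(ζ_j) achieves the variance-reduction factor E(m̆, ρ̆) · p / Var(ζ_0) = ( ∑_{j=0}^n √( (γ_j/γ_0)(r_j² − r_{j+1}²)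 ) )², where p := B/γ_0; i.e., relative to the plain Monte Carlo estimator of E[ζ_0] using the same budget B, the mean squared error is multiplied by this factor. -/
open MeasureTheory ProbabilityTheory

lemma mfc_sqrt_key {c a : ℝ} (d : ℝ) (hc : 0 < c) (ha : 0 < a) :
    d * (Real.sqrt (a * d / c))⁻¹ = Real.sqrt c * Real.sqrt (a⁻¹ * d) := by
  rcases le_or_gt d 0 with hd | hd
  · have h1 : Real.sqrt (a * d / c) = 0 :=
      Real.sqrt_eq_zero'.mpr (by
        apply div_nonpos_of_nonpos_of_nonneg _ hc.le
        exact mul_nonpos_of_nonneg_of_nonpos ha.le hd)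
    have h2 : Real.sqrt (a⁻¹ * d) = 0 :=
      Real.sqrt_eq_zero'.mpr (mul_nonpos_of_nonneg_of_nonpos (by positivity) hd)
    simp [h1, h2]
  · have h1 : Real.sqrt (a * d / c) = Real.sqrt a * Real.sqrt d / Real.sqrt c := by
      rw [Real.sqrt_div (by positivity), Real.sqrt_mul ha.le]
    have h2 : Real.sqrt (a⁻¹ * d) = Real.sqrt d / Real.sqrt a := by
      rw [Real.sqrt_mul (by positivity), Real.sqrt_inv]; ring
    have hsa : Real.sqrt a ≠ 0 := by positivity
    have hsc : Real.sqrt c ≠ 0 := by positivity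
    have hsd : Real.sqrt d ≠ 0 := by positivity
    rw [h1, h2]
    field_simp
    linear_combination (-1) * Real.sq_sqrt hd.le

lemma mfc_telescope (n : ℕ) (f s : ℕ → ℝ) (h0 : s 0 = 1) (hn : s (n + 1) = 0) :
    f 0 + ∑ j ∈ Finset.range n, (f j - f (j + 1)) * (-(s (j + 1)))
      = ∑ j ∈ Finset.range (n + 1), (s j - s (j + 1)) * f j := by
  have e1 : ∑ j ∈ Finset.range (n + 1), (s j - s (j + 1)) * f j
      = ∑ j ∈ Finset.range (n + 1), s j * f j
        - ∑ j ∈ Finset.range (n + 1), s (j + 1) * f j := by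
    rw [← Finset.sum_sub_distrib]; exact Finset.sum_congr rfl fun j _ => by ring
  have e2 : ∑ j ∈ Finset.range n, (f j - f (j + 1)) * (-(s (j + 1)))
      = ∑ j ∈ Finset.range n, s (j + 1) * f (j + 1)
        - ∑ j ∈ Finset.range n, s (j + 1) * f j := by
    rw [← Finset.sum_sub_distrib]; exact Finset.sum_congr rfl fun j _ => by ring
  rw [e1, e2, Finset.sum_range_succ' (fun j => s j * f j),
    Finset.sum_range_succ (fun j => s (j + 1) * f j), h0, hn]
  ring

lemma mfc_sqrt_S {g g0 c : ℝ} (d : ℝ) (hg0 : 0 < g0) (hc : 0 < c) (hg : g ≠ 0) :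
    Real.sqrt (g * g0 * d / c) = (g0 / Real.sqrt c) * Real.sqrt (g / g0 * d) := by
  have h : g * g0 * d / c = (g0 ^ 2 / c) * (g / g0 * d) := by
    field_simp
  rw [h, Real.sqrt_mul (by positivity), Real.sqrt_div (sq_nonneg _), Real.sqrt_sq hg0.le]

/-- **Variance reduction of optimal multi-fidelity Monte Carlo.** Under the hypotheses of the
optimal-allocation theorem, the optimal solution `(m̆, ρ̆)` achieves the variance-reduction
factor `E(m̆, ρ̆)·p/Var(ζ 0) = (∑_{j=0}^n √((γ j/γ 0)(r j² − r (j+1)²)))²` with `p = B/γ 0`,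
relative to the plain Monte Carlo estimator of `E[ζ 0]` using the same budget `B`. -/
theorem multifidelity_variance_reduction_factor
    {Ω : Type*} [MeasurableSpace Ω] (P : Measure Ω) [IsProbabilityMeasure P]
    (n : ℕ) (ζ : ℕ → Ω → ℝ) (hζ : ∀ j, j ≤ n → MemLp (ζ j) 2 P)
    (σ : ℕ → ℝ) (hσdef : σ = fun j => Real.sqrt (variance (ζ j) P))
    (hσpos : ∀ j, j ≤ n → 0 < σ j)
    (γ : ℕ → ℝ) (hγpos : ∀ j, j ≤ n → 0 < γ j)
    (r : ℕ → ℝ)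
    (hrdef : r = fun j => if j ≤ n then cov P (ζ 0) (ζ j) / (σ 0 * σ j) else 0)
    (hr1 : r 1 ^ 2 < 1)
    (hrdec : ∀ j, 1 ≤ j → j ≤ n → |r (j + 1)| < |r j|)
    (hcost : ∀ i, i < n →
      (r i ^ 2 - r (i + 1) ^ 2) / (r (i + 1) ^ 2 - r (i + 2) ^ 2) < γ i / γ (i + 1))
    (B : ℝ) (hB : 0 < B)
    (Efun : (ℕ → ℝ) → (ℕ → ℝ) → ℝ)
    (hE : Efun = fun mm ρ => σ 0 ^ 2 / mm 0
      + ∑ j ∈ Finset.Icc 1 n, (1 / mm (j - 1) - 1 / mm j) *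
          (ρ j ^ 2 * σ j ^ 2 - 2 * ρ j * cov P (ζ 0) (ζ j)))
    (breveM : ℕ → ℝ)
    (hbreveM : breveM = fun j =>
      if j = 0 then
        B * (∑ i ∈ Finset.range (n + 1),
          Real.sqrt (γ i * γ 0 * (r i ^ 2 - r (i + 1) ^ 2) / (1 - r 1 ^ 2)))⁻¹
      else
        (B * (∑ i ∈ Finset.range (n + 1),
          Real.sqrt (γ i * γ 0 * (r i ^ 2 - r (i + 1) ^ 2) / (1 - r 1 ^ 2)))⁻¹)
          * Real.sqrt ((γ 0 / γ j) * (r j ^ 2 - r (j + 1) ^ 2) / (1 - r 1 ^ 2)))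
    (breveρ : ℕ → ℝ)
    (hbreveρ : breveρ = fun j => cov P (ζ 0) (ζ j) / variance (ζ j) P)
    (p : ℝ) (hp : p = B / γ 0) :
    Efun breveM breveρ * p / variance (ζ 0) P
      = (∑ j ∈ Finset.range (n + 1),
          Real.sqrt ((γ j / γ 0) * (r j ^ 2 - r (j + 1) ^ 2))) ^ 2 := by
  have hγ0 : 0 < γ 0 := hγpos 0 n.zero_le
  have hσ0 : 0 < σ 0 := hσpos 0 n.zero_le
  set c : ℝ := 1 - r 1 ^ 2 with hcdef
  have hc : 0 < c := by rw [hcdef]; linarith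
  have hvar : ∀ j, σ j ^ 2 = variance (ζ j) P := by
    intro j; rw [hσdef]; exact Real.sq_sqrt (variance_nonneg _ _)
  have hcov0 : cov P (ζ 0) (ζ 0) = variance (ζ 0) P := by
    rw [variance_eq_integral (hζ 0 n.zero_le).aestronglyMeasurable.aemeasurable]
    simp only [cov, Pi.pow_apply, Pi.sub_apply]
    congr 1
    funext ω
    ring
  have hr0 : r 0 = 1 := by
    rw [hrdef]
    simp only [Nat.zero_le, if_true]
    rw [hcov0, ← hvar 0, sq]
    field_simp
  have hrtop : r (n + 1) = 0 := by rw [hrdef]; simp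
  have hcovj : ∀ j, 1 ≤ j → j ≤ n → cov P (ζ 0) (ζ j) = r j * (σ 0 * σ j) := by
    intro j h1 hj
    have hσj : 0 < σ j := hσpos j hj
    rw [hrdef]
    simp only [if_pos hj]
    exact (div_mul_cancel₀ _ (by positivity)).symm
  have hterm : ∀ j, 1 ≤ j → j ≤ n →
      breveρ j ^ 2 * σ j ^ 2 - 2 * breveρ j * cov P (ζ 0) (ζ j) = -(r j ^ 2 * σ 0 ^ 2) := by
    intro j h1 hj
    have hσj : 0 < σ j := hσpos j hj
    rw [hbreveρ]
    simp only []
    rw [← hvar j, hcovj j h1 hj]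
    field_simp
    ring
  set S : ℝ := ∑ i ∈ Finset.range (n + 1),
      Real.sqrt (γ i * γ 0 * (r i ^ 2 - r (i + 1) ^ 2) / c) with hSdef
  set T : ℝ := ∑ j ∈ Finset.range (n + 1),
      Real.sqrt (γ j / γ 0 * (r j ^ 2 - r (j + 1) ^ 2)) with hTdef
  have hm0 : breveM 0 = B * S⁻¹ := by simp [hbreveM]
  have hmj : ∀ j, j ≠ 0 → breveM j
      = B * S⁻¹ * Real.sqrt (γ 0 / γ j * (r j ^ 2 - r (j + 1) ^ 2) / c) := by
    intro j hj; rw [hbreveM]; simp [hj]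
  -- Step B : value of Efun at the optimum, after telescoping
  have hsum : Efun breveM breveρ
      = σ 0 ^ 2 * ∑ j ∈ Finset.range (n + 1),
          (r j ^ 2 - r (j + 1) ^ 2) * (breveM j)⁻¹ := by
    rw [hE]
    simp only []
    have hIcc : ∑ j ∈ Finset.Icc 1 n, (1 / breveM (j - 1) - 1 / breveM j) *
          (breveρ j ^ 2 * σ j ^ 2 - 2 * breveρ j * cov P (ζ 0) (ζ j))
        = ∑ j ∈ Finset.range n,
            σ 0 ^ 2 * (((breveM j)⁻¹ - (breveM (j + 1))⁻¹) * (-(r (j + 1) ^ 2))) := by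
      rw [show Finset.Icc 1 n = Finset.Ico 1 (n + 1) from (Finset.Ico_add_one_right_eq_Icc 1 n).symm,
        Finset.sum_Ico_eq_sum_range]
      simp only [Nat.add_sub_cancel]
      apply Finset.sum_congr rfl
      intro j hj
      have hjlt : j < n := Finset.mem_range.mp hj
      have h1j : 1 + j = j + 1 := Nat.add_comm 1 j
      rw [h1j, Nat.add_sub_cancel, hterm (j + 1) (by omega) (by omega), one_div, one_div]
      ring
    rw [hIcc, ← Finset.mul_sum, div_eq_mul_inv, ← mul_add]
    congr 1
    exact mfc_telescope n (fun j => (breveM j)⁻¹) (fun j => r j ^ 2)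
      (by simp [hr0]) (by simp [hrtop])
  -- Step C : each term of the resulting sum
  have hstep : ∀ j ∈ Finset.range (n + 1),
      (r j ^ 2 - r (j + 1) ^ 2) * (breveM j)⁻¹
        = S * B⁻¹ * Real.sqrt c * Real.sqrt (γ j / γ 0 * (r j ^ 2 - r (j + 1) ^ 2)) := by
    intro j hj
    have hjn : j ≤ n := Nat.lt_succ_iff.mp (Finset.mem_range.mp hj)
    have hγj : 0 < γ j := hγpos j hjn
    rcases eq_or_ne j 0 with rfl | hj0
    · have hd0 : r 0 ^ 2 - r 1 ^ 2 = c := by rw [hr0, hcdef]; norm_num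
      have hgg : γ 0 / γ 0 = 1 := div_self hγ0.ne'
      rw [hd0, hm0, hgg, one_mul, mul_inv, inv_inv]
      linear_combination (-(S * B⁻¹)) * Real.mul_self_sqrt hc.le
    · have key := mfc_sqrt_key (c := c) (a := γ 0 / γ j)
        (r j ^ 2 - r (j + 1) ^ 2) hc (by positivity)
      rw [inv_div] at key
      rw [hmj j hj0, mul_inv, mul_inv, inv_inv]
      linear_combination (B⁻¹ * S) * key
  -- Step D : relate S and T
  have hST : S = γ 0 / Real.sqrt c * T := by
    rw [hSdef, hTdef, Finset.mul_sum]
    refine Finset.sum_congr rfl fun i hi => ?_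
    exact mfc_sqrt_S _ hγ0 hc (hγpos i (Nat.lt_succ_iff.mp (Finset.mem_range.mp hi))).ne'
  -- Conclusion
  rw [hsum, Finset.sum_congr rfl hstep, ← Finset.mul_sum, ← hTdef, hST, ← hvar 0, hp]
  have hsc : Real.sqrt c ≠ 0 := by positivity
  field_simp
end
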